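/- Let π be an unsigned permutation. If an odd cycle C = (o_1, …, o_m) of the cycle graph G(π) contains a valid oriented triple (o_i, o_j, o_k), with positions i < j < k and o_i > o_k > o_j, then C contains a valid oriented triple (o_{i'}, o_{j'}, o_{k'}), with positions i' < j' < k', such that i' ∈ {1,2} or k' = j' + 1. -/

import Mathlib

/-- Position map of the transposition τ(a,b,c): a rotation of the interval [a, c). -/
def rotFun (a b c p : ℕ) : ℕ :=
  if a ≤ p ∧ p < a + (c - b) then p + (b - a)
  else if a + (c - b) ≤ p ∧ p < c then p - (c - b)
  else p

/-- The permutation of positions performed by the transposition τ(a,b,c). -/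
def rotEquiv (a b c : ℕ) : Equiv.Perm ℕ :=
  if h : a ≤ b ∧ b ≤ c then
    { toFun := rotFun a b c
      invFun := rotFun a (a + c - b) c
      left_inv := by
        intro p
        unfold rotFun
        split_ifs <;> omega
      right_inv := by
        intro p
        unfold rotFun
        split_ifs <;> omega }
  else Equiv.refl ℕ

/-- `π` is (the extended version of) an unsigned permutation of size `n`:
a bijection of the positions `{0, …, n+1}` onto the values `{0, …, n+1}` fixing
`0` and `n+1` (encoded as a permutation of `ℕ` that is the identity beyond `n+1`). -/
def IsExtPerm (n : ℕ) (π : Equiv.Perm ℕ) : Prop :=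
  π 0 = 0 ∧ π (n + 1) = n + 1 ∧ ∀ x : ℕ, n + 1 < x → π x = x

/-- The permutation obtained from `π` by applying the transposition τ(a,b,c),
which exchanges the adjacent segments (π_a … π_{b-1}) and (π_b … π_{c-1}). -/
def applyTransp (π : Equiv.Perm ℕ) (a b c : ℕ) : Equiv.Perm ℕ :=
  (rotEquiv a b c).trans π

/-- Successor along an alternating cycle of the cycle graph `G(π)`: from the source
edge `e_i = (−π_i, +π_{i−1})` we traverse the target edge incident to `+π_{i−1}`,
namely `e'_{π_{i−1}+1} = (−(π_{i−1}+1), +π_{i−1})`, and arrive at the source edge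
whose right endpoint is `−(π_{i−1}+1)`, i.e. the one with index `π⁻¹(π_{i−1}+1)`. -/
def cgNext (π : Equiv.Perm ℕ) (i : ℕ) : ℕ :=
  π.symm (π (i - 1) + 1)

/-- The orbit of source-edge index `i` under `f` within `{1, …, n+1}`:
the set of source edges of the alternating cycle of `G(π)` through `e_i`. -/
def orbitOf (f : ℕ → ℕ) (n i : ℕ) : Finset ℕ :=
  (Finset.range (n + 2)).image (fun k => f^[k] i) ∩ Finset.Icc 1 (n + 1)

/-- The number of odd orbits of `f` on `{1, …, n+1}` (each orbit counted at its
minimal representative). -/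
def coddAux (f : ℕ → ℕ) (n : ℕ) : ℕ :=
  ((Finset.Icc 1 (n + 1)).filter
    (fun i => (∀ j ∈ orbitOf f n i, i ≤ j) ∧ (orbitOf f n i).card % 2 = 1)).card

/-- `c_odd(π)`: the number of odd alternating cycles of the cycle graph `G(π)`. -/
def codd (n : ℕ) (π : Equiv.Perm ℕ) : ℕ := coddAux (cgNext π) n

/-- The transposition τ(a,b,c) (with `1 ≤ a < b < c ≤ n+1`) is a 2-transposition for `π`:
it increases the number of odd cycles of the cycle graph by two. -/
def IsTwoTransposition (n : ℕ) (π : Equiv.Perm ℕ) (a b c : ℕ) : Prop :=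
  1 ≤ a ∧ a < b ∧ b < c ∧ c ≤ n + 1 ∧
  codd n (applyTransp π a b c) = codd n π + 2

/-- `(x, y, z)` (the indices of three source edges, read in cycle order) is a valid
oriented triple: it is an oriented triple, and the transposition acting on these three
source edges (i.e. on their indices sorted increasingly) is a 2-transposition. -/
def ValidOrientedTriple (n : ℕ) (π : Equiv.Perm ℕ) (x y z : ℕ) : Prop :=
  (x > z ∧ z > y ∧ IsTwoTransposition n π y z x) ∨
  (y > x ∧ x > z ∧ IsTwoTransposition n π z x y) ∨
  (z > y ∧ y > x ∧ IsTwoTransposition n π x y z)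

/-- The transposition acting on the three (distinct) source edges `x, y, z`
is a 2-transposition for `π`. -/
def IsTwoTranspositionOn (n : ℕ) (π : Equiv.Perm ℕ) (x y z : ℕ) : Prop :=
  ∃ a b c : ℕ, a < b ∧ b < c ∧ ({a, b, c} : Set ℕ) = {x, y, z} ∧
    IsTwoTransposition n π a b c

/-- `o 1, …, o m` is (the listing of the source-edge indices of) an `m`-cycle of the
cycle graph `G(π)`: the listing follows the traversal of the cycle starting from its
rightmost vertex along the incident source edge, so consecutive listed edges satisfy
`cgNext` and the first listed index is the largest one. -/
def IsCycleOf (n : ℕ) (π : Equiv.Perm ℕ) (m : ℕ) (o : ℕ → ℕ) : Prop :=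
  0 < m ∧
  (∀ t : ℕ, 1 ≤ t → t ≤ m → 1 ≤ o t ∧ o t ≤ n + 1) ∧
  (∀ s t : ℕ, 1 ≤ s → s ≤ m → 1 ≤ t → t ≤ m → o s = o t → s = t) ∧
  (∀ t : ℕ, 1 ≤ t → t ≤ m → cgNext π (o t) = o (t % m + 1)) ∧
  (∀ t : ℕ, 2 ≤ t → t ≤ m → o t < o 1)

/-- The cycle `C = (o 1, …, o m)` is oriented: its listing is not strictly decreasing. -/
def OrientedCycle (m : ℕ) (o : ℕ → ℕ) : Prop :=
  ¬ (∀ t : ℕ, 1 ≤ t → t + 1 ≤ m → o (t + 1) < o t)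

lemma iter_mem {n : ℕ} {θ : ℕ → ℕ}
    (hmap : ∀ x, 1 ≤ x → x ≤ n + 1 → 1 ≤ θ x ∧ θ x ≤ n + 1) :
    ∀ (k x : ℕ), 1 ≤ x → x ≤ n + 1 → 1 ≤ θ^[k] x ∧ θ^[k] x ≤ n + 1 := by
  intro k
  induction k with
  | zero => intro x h1 h2; simpa using ⟨h1, h2⟩
  | succ k ih =>
    intro x h1 h2
    rw [Function.iterate_succ_apply']
    exact hmap _ (ih x h1 h2).1 (ih x h1 h2).2

lemma iter_inj {n : ℕ} {θ : ℕ → ℕ}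
    (hmap : ∀ x, 1 ≤ x → x ≤ n + 1 → 1 ≤ θ x ∧ θ x ≤ n + 1)
    (hinj : ∀ x y, 1 ≤ x → x ≤ n + 1 → 1 ≤ y → y ≤ n + 1 → θ x = θ y → x = y) :
    ∀ (k x y : ℕ), 1 ≤ x → x ≤ n + 1 → 1 ≤ y → y ≤ n + 1 →
    θ^[k] x = θ^[k] y → x = y := by
  intro k
  induction k with
  | zero => intro x y _ _ _ _ h; simpa using h
  | succ k ih =>
    intro x y hx1 hx2 hy1 hy2 h
    rw [Function.iterate_succ_apply', Function.iterate_succ_apply'] at h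
    have h1 := iter_mem hmap k x hx1 hx2
    have h2 := iter_mem hmap k y hy1 hy2
    exact ih x y hx1 hx2 hy1 hy2 (hinj _ _ h1.1 h1.2 h2.1 h2.2 h)

lemma exists_period {n : ℕ} {θ : ℕ → ℕ}
    (hmap : ∀ x, 1 ≤ x → x ≤ n + 1 → 1 ≤ θ x ∧ θ x ≤ n + 1)
    (hinj : ∀ x y, 1 ≤ x → x ≤ n + 1 → 1 ≤ y → y ≤ n + 1 → θ x = θ y → x = y)
    (x : ℕ) (hx1 : 1 ≤ x) (hx2 : x ≤ n + 1) :
    ∃ d, 1 ≤ d ∧ d ≤ n + 1 ∧ θ^[d] x = x := by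
  have hmaps : ∀ k ∈ Finset.range (n+2), θ^[k] x ∈ Finset.Icc 1 (n+1) := by
    intro k _
    have := iter_mem hmap k x hx1 hx2
    simp only [Finset.mem_Icc]; omega
  have hcard : (Finset.Icc 1 (n+1)).card < (Finset.range (n+2)).card := by
    simp [Nat.card_Icc]
  obtain ⟨s, hs, t, ht, hst, heq⟩ :=
    Finset.exists_ne_map_eq_of_card_lt_of_maps_to hcard hmaps
  simp only [Finset.mem_range] at hs ht
  rcases Nat.lt_or_ge s t with h | h
  · refine ⟨t - s, by omega, by omega, ?_⟩
    have : θ^[s] (θ^[t-s] x) = θ^[s] x := by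
      rw [← Function.iterate_add_apply]
      rw [show s + (t - s) = t by omega]; exact heq.symm
    have hb := iter_mem hmap (t-s) x hx1 hx2
    exact iter_inj hmap hinj s _ _ hb.1 hb.2 hx1 hx2 this
  · have h' : t < s := by omega
    refine ⟨s - t, by omega, by omega, ?_⟩
    have : θ^[t] (θ^[s-t] x) = θ^[t] x := by
      rw [← Function.iterate_add_apply]
      rw [show t + (s - t) = s by omega]; exact heq
    have hb := iter_mem hmap (s-t) x hx1 hx2
    exact iter_inj hmap hinj t _ _ hb.1 hb.2 hx1 hx2 this

lemma orbit_of_cycle {n : ℕ} {θ : ℕ → ℕ} (v : ℕ → ℕ) (L : ℕ) (hL : 1 ≤ L) (hLn : L ≤ n + 1)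
    (hmem : ∀ s, s < L → 1 ≤ v s ∧ v s ≤ n + 1)
    (hvinj : ∀ s t, s < L → t < L → v s = v t → s = t)
    (hstep : ∀ s, s < L → θ (v s) = v ((s + 1) % L)) :
    orbitOf θ n (v 0) = (Finset.range L).image v ∧ (orbitOf θ n (v 0)).card = L := by
  have hit : ∀ k, θ^[k] (v 0) = v (k % L) := by
    intro k
    induction k with
    | zero => simp [Nat.mod_eq_of_lt hL]
    | succ k ih =>
      rw [Function.iterate_succ_apply', ih, hstep _ (Nat.mod_lt _ (by omega))]
      congr 1
      conv_rhs => rw [← Nat.div_add_mod k L, Nat.add_assoc, Nat.add_comm (L * (k/L)),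
        Nat.add_mul_mod_self_left]
  have horb : orbitOf θ n (v 0) = (Finset.range L).image v := by
    ext y
    simp only [orbitOf, Finset.mem_inter, Finset.mem_image, Finset.mem_range, Finset.mem_Icc]
    constructor
    · rintro ⟨⟨k, _, rfl⟩, _⟩
      exact ⟨k % L, Nat.mod_lt _ (by omega), (hit k).symm⟩
    · rintro ⟨s, hs, rfl⟩
      refine ⟨⟨s, by omega, ?_⟩, (hmem s hs).1, (hmem s hs).2⟩
      rw [hit s, Nat.mod_eq_of_lt hs]
  refine ⟨horb, ?_⟩
  rw [horb, Finset.card_image_of_injOn, Finset.card_range]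
  intro s hs t ht h
  simp only [Finset.mem_coe, Finset.mem_range] at hs ht
  exact hvinj s t hs ht h

lemma orbit_char {n : ℕ} {θ : ℕ → ℕ}
    (hmap : ∀ x, 1 ≤ x → x ≤ n + 1 → 1 ≤ θ x ∧ θ x ≤ n + 1)
    (hinj : ∀ x y, 1 ≤ x → x ≤ n + 1 → 1 ≤ y → y ≤ n + 1 → θ x = θ y → x = y)
    (x : ℕ) (hx1 : 1 ≤ x) (hx2 : x ≤ n + 1) :
    ∃ d, 1 ≤ d ∧ d ≤ n + 1 ∧ θ^[d] x = x ∧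
      (∀ k, θ^[k] x ∈ orbitOf θ n x) ∧
      (∀ y ∈ orbitOf θ n x, ∃ k, k < d ∧ θ^[k] x = y) ∧
      (orbitOf θ n x).card = d := by
  classical
  have hex : ∃ d, 0 < d ∧ θ^[d] x = x := by
    obtain ⟨d, h1, _, h3⟩ := exists_period hmap hinj x hx1 hx2
    exact ⟨d, by omega, h3⟩
  obtain ⟨d, ⟨hd0, hdfix⟩, hmin⟩ : ∃ d, (0 < d ∧ θ^[d] x = x) ∧
      ∀ e, e < d → ¬(0 < e ∧ θ^[e] x = x) :=
    ⟨Nat.find hex, Nat.find_spec hex, fun e he => Nat.find_min hex he⟩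
  have hdle : d ≤ n + 1 := by
    obtain ⟨d', h1, h2, h3⟩ := exists_period hmap hinj x hx1 hx2
    by_contra hc
    exact hmin d' (by omega) ⟨by omega, h3⟩
  have hrinj : ∀ s t, s < d → t < d → θ^[s] x = θ^[t] x → s = t := by
    intro s t hs ht h
    by_contra hne
    rcases Nat.lt_or_ge s t with hlt | hge
    · have h2 : θ^[s] (θ^[t-s] x) = θ^[s] x := by
        rw [← Function.iterate_add_apply, show s + (t - s) = t by omega]; exact h.symm
      have hb := iter_mem hmap (t-s) x hx1 hx2
      have := iter_inj hmap hinj s _ _ hb.1 hb.2 hx1 hx2 h2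
      exact hmin (t - s) (by omega) ⟨by omega, this⟩
    · have hlt : t < s := by omega
      have h2 : θ^[t] (θ^[s-t] x) = θ^[t] x := by
        rw [← Function.iterate_add_apply, show t + (s - t) = s by omega]; exact h
      have hb := iter_mem hmap (s-t) x hx1 hx2
      have := iter_inj hmap hinj t _ _ hb.1 hb.2 hx1 hx2 h2
      exact hmin (s - t) (by omega) ⟨by omega, this⟩
  have hkey := orbit_of_cycle (θ := θ) (fun s => θ^[s] x) d hd0 hdle
    (fun s _ => iter_mem hmap s x hx1 hx2)
    (fun s t hs ht h => hrinj s t hs ht h)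
    (fun s hs => by
      rw [← Function.iterate_succ_apply' θ s x]
      rcases Nat.lt_or_ge (s+1) d with h | h
      · rw [Nat.mod_eq_of_lt h]
      · have h0 : (s+1) % d = 0 := by
          have hsd : s + 1 = d := by omega
          simp [hsd]
        rw [h0]
        simp only [Function.iterate_zero_apply]
        have he : θ^[s+1] x = θ^[d] x := by congr 1; omega
        rw [he, hdfix])
  simp only [Function.iterate_zero_apply] at hkey
  obtain ⟨horb, hcard⟩ := hkey
  have hitmod : ∀ k, θ^[k] x = θ^[k % d] x := by
    intro k
    induction k using Nat.strong_induction_on with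
    | _ k ih =>
      rcases Nat.lt_or_ge k d with h | h
      · rw [Nat.mod_eq_of_lt h]
      · have hstep : θ^[k] x = θ^[k-d] x := by
          have h2 : θ^[k] x = θ^[k-d] (θ^[d] x) := by
            rw [← Function.iterate_add_apply]
            congr 1
            omega
          rw [h2, hdfix]
        rw [hstep, ih (k-d) (by omega), Nat.mod_eq_sub_mod h]
  refine ⟨d, hd0, hdle, hdfix, ?_, ?_, hcard⟩
  · intro k
    rw [horb, hitmod k]
    exact Finset.mem_image.2 ⟨k % d, Finset.mem_range.2 (Nat.mod_lt _ (by omega)), rfl⟩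
  · intro y hy
    rw [horb] at hy
    obtain ⟨s, hs, hsy⟩ := Finset.mem_image.1 hy
    exact ⟨s, Finset.mem_range.1 hs, hsy⟩

lemma orbit_subset_Icc {n : ℕ} {θ : ℕ → ℕ} (x : ℕ) :
    ∀ y ∈ orbitOf θ n x, 1 ≤ y ∧ y ≤ n + 1 := by
  intro y hy
  simp only [orbitOf, Finset.mem_inter, Finset.mem_Icc] at hy
  exact hy.2

lemma self_mem_orbit {n : ℕ} {θ : ℕ → ℕ} (x : ℕ) (hx1 : 1 ≤ x) (hx2 : x ≤ n + 1) :
    x ∈ orbitOf θ n x := by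
  simp only [orbitOf, Finset.mem_inter, Finset.mem_image, Finset.mem_range, Finset.mem_Icc]
  exact ⟨⟨0, by omega, rfl⟩, hx1, hx2⟩

lemma orbit_eq_of_mem {n : ℕ} {θ : ℕ → ℕ}
    (hmap : ∀ x, 1 ≤ x → x ≤ n + 1 → 1 ≤ θ x ∧ θ x ≤ n + 1)
    (hinj : ∀ x y, 1 ≤ x → x ≤ n + 1 → 1 ≤ y → y ≤ n + 1 → θ x = θ y → x = y)
    (x : ℕ) (hx1 : 1 ≤ x) (hx2 : x ≤ n + 1) (y : ℕ)
    (hy : y ∈ orbitOf θ n x) : orbitOf θ n y = orbitOf θ n x := by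
  obtain ⟨hy1, hy2⟩ := orbit_subset_Icc x y hy
  obtain ⟨d, hd0, hdle, hdfix, hself, hrep, hcard⟩ := orbit_char hmap hinj x hx1 hx2
  obtain ⟨k, hk, hky⟩ := hrep y hy
  obtain ⟨d', hd0', hdle', hdfix', hself', hrep', hcard'⟩ := orbit_char hmap hinj y hy1 hy2
  apply Finset.Subset.antisymm
  · intro z hz
    obtain ⟨s, _, hsz⟩ := hrep' z hz
    have hz2 : z = θ^[s + k] x := by rw [Function.iterate_add_apply, hky, hsz]
    rw [hz2]; exact hself _
  · intro z hz
    obtain ⟨s, _, hsz⟩ := hrep z hz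
    have hxy : x = θ^[d - k] y := by
      rw [← hky, ← Function.iterate_add_apply, show d - k + k = d by omega, hdfix]
    have hz2 : z = θ^[s + (d - k)] y := by rw [Function.iterate_add_apply, ← hxy, hsz]
    rw [hz2]; exact hself' _

lemma filter_orbit_card {n : ℕ} {θ : ℕ → ℕ} (A : Finset ℕ) (hA : A.Nonempty)
    (horb : ∀ x ∈ A, orbitOf θ n x = A) :
    (A.filter (fun i => (∀ j ∈ orbitOf θ n i, i ≤ j) ∧ (orbitOf θ n i).card % 2 = 1)).card
      = A.card % 2 := by
  classical
  rcases Nat.lt_or_ge (A.card % 2) 1 with h | h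
  · have h0 : A.card % 2 = 0 := by omega
    rw [h0, Finset.card_eq_zero]
    ext y
    simp only [Finset.mem_filter, Finset.notMem_empty, iff_false, not_and]
    intro hy _
    rw [horb y hy]
    omega
  · have h1 : A.card % 2 = 1 := by omega
    rw [h1, Finset.card_eq_one]
    refine ⟨A.min' hA, ?_⟩
    ext y
    simp only [Finset.mem_filter, Finset.mem_singleton]
    constructor
    · rintro ⟨hy, hmin, _⟩
      have h2 := A.min'_le y hy
      have h3 : y ≤ A.min' hA := by
        apply hmin; rw [horb y hy]; exact A.min'_mem hA
      omega
    · rintro rfl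
      have hm := A.min'_mem hA
      refine ⟨hm, ?_, ?_⟩
      · intro j hj; rw [horb _ hm] at hj; exact A.min'_le j hj
      · rw [horb _ hm]; exact h1


def fmin (s : Finset ℕ) : ℕ := WithTop.untopD 0 s.min

lemma fmin_eq_min' {s : Finset ℕ} (h : s.Nonempty) : fmin s = s.min' h := by
  rw [fmin, ← Finset.coe_min' h]
  rfl

lemma fmin_spec {s : Finset ℕ} {x : ℕ} (hx : x ∈ s) :
    fmin s ∈ s ∧ ∀ y ∈ s, fmin s ≤ y := by
  have hne : s.Nonempty := ⟨x, hx⟩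
  rw [fmin_eq_min' hne]
  exact ⟨s.min'_mem hne, fun y hy => s.min'_le y hy⟩

lemma coddAux_conj {n : ℕ} (u : ℕ → ℕ) (w : Equiv.Perm ℕ)
    (hu_map : ∀ x, 1 ≤ x → x ≤ n + 1 → 1 ≤ u x ∧ u x ≤ n + 1)
    (hu_inj : ∀ x y, 1 ≤ x → x ≤ n + 1 → 1 ≤ y → y ≤ n + 1 → u x = u y → x = y)
    (hw : ∀ z, (1 ≤ w z ∧ w z ≤ n + 1) ↔ (1 ≤ z ∧ z ≤ n + 1))
    (f₂ : ℕ → ℕ) (hconj : ∀ x, f₂ x = w.symm (u (w x))) :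
    coddAux f₂ n = coddAux u n := by
  classical
  have hws : ∀ z, (1 ≤ w.symm z ∧ w.symm z ≤ n + 1) ↔ (1 ≤ z ∧ z ≤ n + 1) := by
    intro z
    have h := hw (w.symm z)
    rw [Equiv.apply_symm_apply] at h
    exact h.symm
  have hiter : ∀ k x, f₂^[k] x = w.symm (u^[k] (w x)) := by
    intro k
    induction k with
    | zero => intro x; simp
    | succ k ih =>
      intro x
      rw [Function.iterate_succ_apply', Function.iterate_succ_apply', ih, hconj,
        Equiv.apply_symm_apply]
  have horb : ∀ x, orbitOf f₂ n x = (orbitOf u n (w x)).image w.symm := by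
    intro x
    ext y
    simp only [orbitOf, Finset.mem_inter, Finset.mem_image, Finset.mem_range, Finset.mem_Icc]
    constructor
    · rintro ⟨⟨k, hk, rfl⟩, hb⟩
      refine ⟨u^[k] (w x), ⟨⟨k, hk, rfl⟩, ?_⟩, (hiter k x).symm ▸ rfl⟩
      · have h2 := (hws (u^[k] (w x))).1
        rw [← hiter k x] at h2
        exact h2 hb
    · rintro ⟨z, ⟨⟨k, hk, rfl⟩, hb⟩, rfl⟩
      refine ⟨⟨k, hk, (hiter k x)⟩, (hws _).2 hb⟩
  have hf₂map : ∀ x, 1 ≤ x → x ≤ n + 1 → 1 ≤ f₂ x ∧ f₂ x ≤ n + 1 := by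
    intro x h1 h2
    rw [hconj]
    exact (hws _).2 (hu_map _ ((hw x).2 ⟨h1, h2⟩).1 ((hw x).2 ⟨h1, h2⟩).2)
  have hf₂inj : ∀ x y, 1 ≤ x → x ≤ n + 1 → 1 ≤ y → y ≤ n + 1 → f₂ x = f₂ y → x = y := by
    intro x y h1 h2 h3 h4 h
    rw [hconj, hconj] at h
    have h5 := w.symm.injective h
    have h6 := hu_inj (w x) (w y) ((hw x).2 ⟨h1, h2⟩).1 ((hw x).2 ⟨h1, h2⟩).2
      ((hw y).2 ⟨h3, h4⟩).1 ((hw y).2 ⟨h3, h4⟩).2 h5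
    exact w.injective h6
  unfold coddAux
  apply Finset.card_bij (fun a _ => fmin (orbitOf u n (w a)))
  · -- maps to
    intro a ha
    simp only [Finset.mem_filter, Finset.mem_Icc] at ha ⊢
    obtain ⟨⟨ha1, ha2⟩, hmin, hodd⟩ := ha
    have hwa : 1 ≤ w a ∧ w a ≤ n + 1 := (hw a).2 ⟨ha1, ha2⟩
    have hself : w a ∈ orbitOf u n (w a) := self_mem_orbit _ hwa.1 hwa.2
    obtain ⟨hjmem, hjle⟩ := fmin_spec hself
    have hjb := orbit_subset_Icc (θ := u) (w a) _ hjmem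
    have horbj : orbitOf u n (fmin (orbitOf u n (w a))) = orbitOf u n (w a) :=
      orbit_eq_of_mem hu_map hu_inj (w a) hwa.1 hwa.2 _ hjmem
    refine ⟨⟨hjb.1, hjb.2⟩, ?_, ?_⟩
    · intro j hj
      rw [horbj] at hj
      exact hjle j hj
    · rw [horbj]
      have hcardeq : (orbitOf f₂ n a).card = (orbitOf u n (w a)).card := by
        rw [horb a, Finset.card_image_of_injective _ w.symm.injective]
      omega
  · -- injective
    intro a ha a' ha' heq
    simp only [Finset.mem_filter, Finset.mem_Icc] at ha ha'
    obtain ⟨⟨ha1, ha2⟩, hamin, _⟩ := ha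
    obtain ⟨⟨ha1', ha2'⟩, hamin', _⟩ := ha'
    have hwa : 1 ≤ w a ∧ w a ≤ n + 1 := (hw a).2 ⟨ha1, ha2⟩
    have hwa' : 1 ≤ w a' ∧ w a' ≤ n + 1 := (hw a').2 ⟨ha1', ha2'⟩
    have hself : w a ∈ orbitOf u n (w a) := self_mem_orbit _ hwa.1 hwa.2
    have hself' : w a' ∈ orbitOf u n (w a') := self_mem_orbit _ hwa'.1 hwa'.2
    have h1 : orbitOf u n (fmin (orbitOf u n (w a))) = orbitOf u n (w a) :=
      orbit_eq_of_mem hu_map hu_inj (w a) hwa.1 hwa.2 _ (fmin_spec hself).1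
    have h2 : orbitOf u n (fmin (orbitOf u n (w a'))) = orbitOf u n (w a') :=
      orbit_eq_of_mem hu_map hu_inj (w a') hwa'.1 hwa'.2 _ (fmin_spec hself').1
    have hOO : orbitOf u n (w a) = orbitOf u n (w a') := by rw [← h1, ← h2, heq]
    have horbeq : orbitOf f₂ n a = orbitOf f₂ n a' := by
      rw [horb, horb, hOO]
    have hmema : a ∈ orbitOf f₂ n a' := horbeq ▸ self_mem_orbit a ha1 ha2
    have hmema' : a' ∈ orbitOf f₂ n a := horbeq ▸ self_mem_orbit a' ha1' ha2'
    exact le_antisymm (hamin a' hmema') (hamin' a hmema)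
  · -- surjective
    intro j hj
    simp only [Finset.mem_filter, Finset.mem_Icc] at hj
    obtain ⟨⟨hj1, hj2⟩, hjmin, hjodd⟩ := hj
    have hx0 : 1 ≤ w.symm j ∧ w.symm j ≤ n + 1 := (hws j).2 ⟨hj1, hj2⟩
    have horbx0 : orbitOf f₂ n (w.symm j) = (orbitOf u n j).image w.symm := by
      rw [horb, Equiv.apply_symm_apply]
    have hselfx0 : w.symm j ∈ orbitOf f₂ n (w.symm j) := self_mem_orbit _ hx0.1 hx0.2
    obtain ⟨hamem, hale⟩ := fmin_spec hselfx0
    set a := fmin (orbitOf f₂ n (w.symm j)) with ha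
    have hab := orbit_subset_Icc (θ := f₂) (w.symm j) _ hamem
    have horba : orbitOf f₂ n a = orbitOf f₂ n (w.symm j) :=
      orbit_eq_of_mem hf₂map hf₂inj (w.symm j) hx0.1 hx0.2 _ hamem
    have hwa_mem : w a ∈ orbitOf u n j := by
      have h3 := horbx0 ▸ hamem
      obtain ⟨z, hz, hza⟩ := Finset.mem_image.1 h3
      have h4 : w a = z := by rw [← hza, Equiv.apply_symm_apply]
      rwa [h4]
    have horbwa : orbitOf u n (w a) = orbitOf u n j :=
      orbit_eq_of_mem hu_map hu_inj j hj1 hj2 _ hwa_mem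
    refine ⟨a, ?_, ?_⟩
    · simp only [Finset.mem_filter, Finset.mem_Icc]
      refine ⟨⟨hab.1, hab.2⟩, ?_, ?_⟩
      · intro z hz
        rw [horba] at hz
        exact hale z hz
      · rw [horba, horbx0, Finset.card_image_of_injective _ w.symm.injective]
        exact hjodd
    · rw [horbwa]
      have hjself : j ∈ orbitOf u n j := self_mem_orbit _ hj1 hj2
      obtain ⟨hm1, hm2⟩ := fmin_spec hjself
      exact le_antisymm (hm2 j hjself) (hjmin _ hm1)

-- ======================= Part IV : cgNext and transposition facts =======================

def sigFun (a b c x : ℕ) : ℕ := if x = a then c else if x = b then a else if x = c then b else x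

lemma rotEquiv_apply {a b c : ℕ} (h1 : a ≤ b) (h2 : b ≤ c) (x : ℕ) :
    rotEquiv a b c x = rotFun a b c x := by
  unfold rotEquiv
  rw [dif_pos ⟨h1, h2⟩]
  rfl

lemma rotEquiv_symm_apply {a b c : ℕ} (h1 : a ≤ b) (h2 : b ≤ c) (x : ℕ) :
    (rotEquiv a b c).symm x = rotFun a (a + c - b) c x := by
  unfold rotEquiv
  rw [dif_pos ⟨h1, h2⟩]
  rfl

lemma extperm_lt {n : ℕ} {π : Equiv.Perm ℕ} (hπ : IsExtPerm n π) :
    ∀ x, x ≤ n + 1 → π x ≤ n + 1 := by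
  intro x hx
  by_contra hc
  have h1 := hπ.2.2 (π x) (by omega)
  have h2 := π.injective h1
  omega

lemma extperm_symm_lt {n : ℕ} {π : Equiv.Perm ℕ} (hπ : IsExtPerm n π) :
    ∀ y, y ≤ n + 1 → π.symm y ≤ n + 1 := by
  intro y hy
  by_contra hc
  have h1 := hπ.2.2 (π.symm y) (by omega)
  rw [Equiv.apply_symm_apply] at h1
  omega

lemma cgNext_map {n : ℕ} {π : Equiv.Perm ℕ} (hπ : IsExtPerm n π) :
    ∀ x, 1 ≤ x → x ≤ n + 1 → 1 ≤ cgNext π x ∧ cgNext π x ≤ n + 1 := by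
  intro x h1 h2
  unfold cgNext
  constructor
  · by_contra hc
    have h0 : π.symm (π (x-1) + 1) = 0 := by omega
    have h3 : π (x-1) + 1 = π 0 := by
      rw [← h0, Equiv.apply_symm_apply]
    rw [hπ.1] at h3
    omega
  · apply extperm_symm_lt hπ
    have h4 : π (x - 1) ≤ n + 1 := extperm_lt hπ _ (by omega)
    have h5 : π (x - 1) ≠ n + 1 := by
      intro hc
      have : π (x - 1) = π (n + 1) := by rw [hc, hπ.2.1]
      have := π.injective this
      omega
    omega

lemma cgNext_inj {n : ℕ} {π : Equiv.Perm ℕ} :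
    ∀ x y, 1 ≤ x → x ≤ n + 1 → 1 ≤ y → y ≤ n + 1 → cgNext π x = cgNext π y → x = y := by
  intro x y h1 _ h3 _ h
  unfold cgNext at h
  have h5 := π.symm.injective h
  have h6 : π (x - 1) = π (y - 1) := by omega
  have h7 := π.injective h6
  omega

lemma extperm_applyTransp {n : ℕ} {π : Equiv.Perm ℕ} (hπ : IsExtPerm n π)
    {a b c : ℕ} (h1 : 1 ≤ a) (h2 : a < b) (h3 : b < c) (h4 : c ≤ n + 1) :
    IsExtPerm n (applyTransp π a b c) := by
  have hr : ∀ x, (x = 0 ∨ n + 1 ≤ x) → rotEquiv a b c x = x := by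
    intro x hx
    rw [rotEquiv_apply (by omega) (by omega)]
    unfold rotFun
    split_ifs <;> omega
  refine ⟨?_, ?_, ?_⟩
  · show π (rotEquiv a b c 0) = 0
    rw [hr 0 (Or.inl rfl), hπ.1]
  · show π (rotEquiv a b c (n+1)) = n + 1
    rw [hr (n+1) (by omega), hπ.2.1]
  · intro x hx
    show π (rotEquiv a b c x) = x
    rw [hr x (by omega)]
    exact hπ.2.2 x hx

lemma conj_pointwise {n : ℕ} {π : Equiv.Perm ℕ}
    {a b c : ℕ} (h1 : 1 ≤ a) (h2 : a < b) (h3 : b < c) (h4 : c ≤ n + 1) :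
    ∀ x, cgNext (applyTransp π a b c) x =
      (rotEquiv (a+1) (b+1) (c+1)).symm (sigFun a b c (cgNext π (rotEquiv (a+1) (b+1) (c+1) x))) := by
  intro x
  have hKI : ∀ y, rotEquiv (a+1) (b+1) (c+1) ((rotEquiv a b c).symm y) = sigFun a b c y := by
    intro y
    rw [rotEquiv_symm_apply (by omega) (by omega), rotEquiv_apply (by omega) (by omega)]
    unfold rotFun sigFun
    split_ifs <;> omega
  have hshift : rotEquiv a b c (x - 1) = rotEquiv (a+1) (b+1) (c+1) x - 1 := by
    rw [rotEquiv_apply (by omega) (by omega), rotEquiv_apply (by omega) (by omega)]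
    unfold rotFun
    split_ifs <;> omega
  unfold cgNext applyTransp
  rw [Equiv.trans_apply, Equiv.symm_trans_apply]
  rw [hshift]
  set y := π.symm (π (rotEquiv (a+1) (b+1) (c+1) x - 1) + 1) with hy
  rw [← hKI y, Equiv.symm_apply_apply]

lemma sig_map {n : ℕ} {a b c : ℕ} (h1 : 1 ≤ a) (h2 : a < b) (h3 : b < c) (h4 : c ≤ n + 1) :
    ∀ x, 1 ≤ x → x ≤ n + 1 → 1 ≤ sigFun a b c x ∧ sigFun a b c x ≤ n + 1 := by
  intro x hx1 hx2
  unfold sigFun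
  split_ifs <;> omega

lemma sig_inj {a b c : ℕ} (h2 : a < b) (h3 : b < c) :
    ∀ x y, sigFun a b c x = sigFun a b c y → x = y := by
  intro x y h
  unfold sigFun at h
  split_ifs at h <;> omega

lemma sig_id {a b c : ℕ} (x : ℕ) (hx1 : x ≠ a) (hx2 : x ≠ b) (hx3 : x ≠ c) :
    sigFun a b c x = x := by
  unfold sigFun
  split_ifs <;> omega

lemma rotEquiv_Icc {n : ℕ} {a b c : ℕ} (h1 : 1 ≤ a) (h2 : a < b) (h3 : b < c) (h4 : c ≤ n + 1) :
    ∀ z, (1 ≤ rotEquiv (a+1) (b+1) (c+1) z ∧ rotEquiv (a+1) (b+1) (c+1) z ≤ n + 1) ↔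
      (1 ≤ z ∧ z ≤ n + 1) := by
  intro z
  rw [rotEquiv_apply (by omega) (by omega)]
  unfold rotFun
  split_ifs <;> omega

-- ======================= Part V : the splitting lemma =======================

lemma filter_card_split {α : Type*} [DecidableEq α] (S T : Finset α) (P : α → Prop)
    [DecidablePred P] (hT : T ⊆ S) :
    (S.filter P).card = (T.filter P).card + ((S \ T).filter P).card := by
  rw [← Finset.card_union_of_disjoint
    (Finset.disjoint_filter_filter Finset.disjoint_sdiff),
    ← Finset.filter_union, Finset.union_sdiff_of_subset hT]

lemma splitting {n : ℕ} {π : Equiv.Perm ℕ} (hπ : IsExtPerm n π)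
    {m : ℕ} {o : ℕ → ℕ} (hC : IsCycleOf n π m o) (hOdd : m % 2 = 1)
    {p q r : ℕ} (hp : 1 ≤ p) (hpq : p < q) (hqr : q < r) (hrm : r ≤ m)
    (hpat1 : o p > o r) (hpat2 : o r > o q) :
    codd n (applyTransp π (o q) (o r) (o p)) + 1 =
      codd n π + ((q - p) % 2 + (r - q) % 2 + ((m - r + p) % 2)) := by
  classical
  obtain ⟨hm0, hbound, hoinj, hstep, hmax⟩ := hC
  have hpb := hbound p (by omega) (by omega)
  have hqb := hbound q (by omega) (by omega)
  have hrb := hbound r (by omega) (by omega)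
  set a := o q with ha_def
  set b := o r with hb_def
  set c := o p with hc_def
  have h1a : 1 ≤ a := hqb.1
  have hab : a < b := hpat2
  have hbc : b < c := hpat1
  have hcn : c ≤ n + 1 := hpb.2
  set f := cgNext π with hf_def
  set u := fun x => sigFun a b c (f x) with hu_def
  have hf_map : ∀ x, 1 ≤ x → x ≤ n + 1 → 1 ≤ f x ∧ f x ≤ n + 1 := cgNext_map hπ
  have hf_inj : ∀ x y, 1 ≤ x → x ≤ n + 1 → 1 ≤ y → y ≤ n + 1 → f x = f y → x = y :=
    cgNext_inj
  have hu_map : ∀ x, 1 ≤ x → x ≤ n + 1 → 1 ≤ u x ∧ u x ≤ n + 1 := by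
    intro x h1 h2
    exact sig_map h1a hab hbc hcn _ (hf_map x h1 h2).1 (hf_map x h1 h2).2
  have hu_inj : ∀ x y, 1 ≤ x → x ≤ n + 1 → 1 ≤ y → y ≤ n + 1 → u x = u y → x = y := by
    intro x y h1 h2 h3 h4 h
    exact hf_inj x y h1 h2 h3 h4 (sig_inj hab hbc _ _ h)
  have hmn : m ≤ n + 1 := by
    have hsub : (Finset.Icc 1 m).image o ⊆ Finset.Icc 1 (n+1) := by
      intro y hy
      obtain ⟨t, ht, rfl⟩ := Finset.mem_image.1 hy
      simp only [Finset.mem_Icc] at ht ⊢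
      exact ⟨(hbound t ht.1 ht.2).1, (hbound t ht.1 ht.2).2⟩
    have hcard : ((Finset.Icc 1 m).image o).card = m := by
      rw [Finset.card_image_of_injOn, Nat.card_Icc]
      · omega
      · intro s hs t ht h
        simp only [Finset.mem_coe, Finset.mem_Icc] at hs ht
        exact hoinj s t hs.1 hs.2 ht.1 ht.2 h
    have := Finset.card_le_card hsub
    rw [hcard, Nat.card_Icc] at this
    omega
  have hoinj' : ∀ s t, 1 ≤ s → s ≤ m → 1 ≤ t → t ≤ m → s ≠ t → o s ≠ o t := by
    intro s t h1 h2 h3 h4 hne heq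
    exact hne (hoinj s t h1 h2 h3 h4 heq)
  -- the big cycle as an orbit of f
  have hOC := orbit_of_cycle (θ := f) (n := n) (fun s => o (s+1)) m hm0 hmn
    (fun s hs => hbound (s+1) (by omega) (by omega))
    (fun s t hs ht h => by
      have := hoinj (s+1) (t+1) (by omega) (by omega) (by omega) (by omega) h
      omega)
    (fun s hs => hstep (s+1) (by omega) (by omega))
  set OC := (Finset.range m).image (fun s => o (s+1)) with hOC_def
  obtain ⟨horbC0, hcardC0⟩ := hOC
  have horbC : orbitOf f n (o 1) = OC := horbC0
  have hcardC : (orbitOf f n (o 1)).card = m := hcardC0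
  have hmemOC : ∀ t, 1 ≤ t → t ≤ m → o t ∈ OC := by
    intro t h1 h2
    rw [hOC_def]
    exact Finset.mem_image.2 ⟨t - 1, Finset.mem_range.2 (by omega), by
      show o (t - 1 + 1) = o t; congr 1; omega⟩
  have horbOC : ∀ x ∈ OC, orbitOf f n x = OC := by
    intro x hx
    rw [← horbC]
    exact orbit_eq_of_mem hf_map hf_inj (o 1) (hbound 1 le_rfl (by omega)).1
      (hbound 1 le_rfl (by omega)).2 x (horbC ▸ hx)
  have hOC_sub : OC ⊆ Finset.Icc 1 (n + 1) := by
    intro y hy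
    rw [hOC_def] at hy
    obtain ⟨s, hs, rfl⟩ := Finset.mem_image.1 hy
    simp only [Finset.mem_range] at hs
    simp only [Finset.mem_Icc]
    exact ⟨(hbound (s+1) (by omega) (by omega)).1, (hbound (s+1) (by omega) (by omega)).2⟩
  have hOCcard : OC.card = m := by rw [← horbC]; exact hcardC
  -- sigma values
  have hsiga : sigFun a b c a = c := by unfold sigFun; rw [if_pos rfl]
  have hsigb : sigFun a b c b = a := by
    unfold sigFun; rw [if_neg (by omega), if_pos rfl]
  have hsigc : sigFun a b c c = b := by
    unfold sigFun; rw [if_neg (by omega), if_neg (by omega), if_pos rfl]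
  have hsig_id : ∀ t, 1 ≤ t → t ≤ m → t ≠ p → t ≠ q → t ≠ r → sigFun a b c (o t) = o t := by
    intro t h1 h2 h3 h4 h5
    exact sig_id _ (hoinj' t q h1 h2 (by omega) (by omega) h4)
      (hoinj' t r h1 h2 (by omega) (by omega) h5)
      (hoinj' t p h1 h2 (by omega) (by omega) h3)
  -- arc 1 : positions p .. q-1
  have hArc1 := orbit_of_cycle (θ := u) (n := n) (fun s => o (p + s)) (q - p)
    (by omega) (by omega)
    (fun s hs => hbound (p+s) (by omega) (by omega))
    (fun s t hs ht h => by
      have := hoinj (p+s) (p+t) (by omega) (by omega) (by omega) (by omega) h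
      omega)
    (fun s hs => by
      show sigFun a b c (f (o (p + s))) = o (p + (s+1) % (q-p))
      rw [hstep (p+s) (by omega) (by omega), Nat.mod_eq_of_lt (show p+s < m by omega)]
      rcases Nat.lt_or_ge (s+1) (q-p) with h | h
      · rw [hsig_id (p+s+1) (by omega) (by omega) (by omega) (by omega) (by omega),
          Nat.mod_eq_of_lt h]
        all_goals exact congrArg o (by omega)
      · have hq : p + s + 1 = q := by omega
        rw [hq, ← ha_def, hsiga]
        have h0 : (s + 1) % (q - p) = 0 := by
          have hseq : s + 1 = q - p := by omega
          simp [hseq]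
        rw [h0, hc_def]
        all_goals exact congrArg o (by omega))
  obtain ⟨horbA10, hcardA10⟩ := hArc1
  set A1 := (Finset.range (q-p)).image (fun s => o (p + s)) with hA1_def
  have horbA1 : orbitOf u n (o p) = A1 := horbA10
  have hcardA1 : A1.card = q - p := by rw [← horbA1]; exact hcardA10
  -- arc 2 : positions q .. r-1
  have hArc2 := orbit_of_cycle (θ := u) (n := n) (fun s => o (q + s)) (r - q)
    (by omega) (by omega)
    (fun s hs => hbound (q+s) (by omega) (by omega))
    (fun s t hs ht h => by
      have := hoinj (q+s) (q+t) (by omega) (by omega) (by omega) (by omega) h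
      omega)
    (fun s hs => by
      show sigFun a b c (f (o (q + s))) = o (q + (s+1) % (r-q))
      rw [hstep (q+s) (by omega) (by omega), Nat.mod_eq_of_lt (show q+s < m by omega)]
      rcases Nat.lt_or_ge (s+1) (r-q) with h | h
      · rw [hsig_id (q+s+1) (by omega) (by omega) (by omega) (by omega) (by omega),
          Nat.mod_eq_of_lt h]
        all_goals exact congrArg o (by omega)
      · have hr : q + s + 1 = r := by omega
        rw [hr, ← hb_def, hsigb]
        have h0 : (s + 1) % (r - q) = 0 := by
          have hseq : s + 1 = r - q := by omega
          simp [hseq]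
        rw [h0, ha_def]
        all_goals exact congrArg o (by omega))
  obtain ⟨horbA20, hcardA20⟩ := hArc2
  set A2 := (Finset.range (r-q)).image (fun s => o (q + s)) with hA2_def
  have horbA2 : orbitOf u n (o q) = A2 := horbA20
  have hcardA2 : A2.card = r - q := by rw [← horbA2]; exact hcardA20
  -- arc 3 : positions r .. m then 1 .. p-1
  have hArc3 := orbit_of_cycle (θ := u) (n := n)
    (fun s => o (if r + s ≤ m then r + s else r + s - m)) (m - r + p)
    (by omega) (by omega)
    (fun s hs => by
      constructor
      · exact (hbound _ (by split_ifs <;> omega) (by split_ifs <;> omega)).1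
      · exact (hbound _ (by split_ifs <;> omega) (by split_ifs <;> omega)).2)
    (fun s t hs ht h => by
      have := hoinj _ _ (show 1 ≤ (if r + s ≤ m then r + s else r + s - m) by
          split_ifs <;> omega)
        (show (if r + s ≤ m then r + s else r + s - m) ≤ m by split_ifs <;> omega)
        (show 1 ≤ (if r + t ≤ m then r + t else r + t - m) by split_ifs <;> omega)
        (show (if r + t ≤ m then r + t else r + t - m) ≤ m by split_ifs <;> omega) h
      split_ifs at this <;> omega)
    (fun s hs => by
      show sigFun a b c (f (o (if r + s ≤ m then r + s else r + s - m))) =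
        o (if r + (s+1) % (m-r+p) ≤ m then r + (s+1) % (m-r+p)
           else r + (s+1) % (m-r+p) - m)
      by_cases hsm : r + s ≤ m
      · rw [if_pos hsm]
        rw [hstep (r+s) (by omega) (by omega)]
        by_cases hlast : r + s = m
        · rw [hlast, Nat.mod_self]
          by_cases hp1 : p = 1
          · have h01 : o (0 + 1) = c := by rw [hc_def, hp1]
            rw [h01, hsigc]
            have h0 : (s + 1) % (m - r + p) = 0 := by
              have hseq : s + 1 = m - r + p := by omega
              simp [hseq]
            rw [h0, if_pos (by omega), hb_def]
            all_goals exact congrArg o (by omega)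
          · rw [show (0 : ℕ) + 1 = 1 by rfl,
              hsig_id 1 le_rfl (by omega) (by omega) (by omega) (by omega)]
            have hlt : s + 1 < m - r + p := by omega
            rw [Nat.mod_eq_of_lt hlt, if_neg (by omega)]
            all_goals exact congrArg o (by omega)
        · rw [Nat.mod_eq_of_lt (show r + s < m by omega)]
          have hlt : s + 1 < m - r + p := by omega
          rw [hsig_id (r+s+1) (by omega) (by omega) (by omega) (by omega) (by omega),
            Nat.mod_eq_of_lt hlt, if_pos (by omega)]
          all_goals exact congrArg o (by omega)
      · rw [if_neg hsm]
        rw [hstep (r+s-m) (by omega) (by omega),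
          Nat.mod_eq_of_lt (show r+s-m < m by omega)]
        by_cases hlast : r + s - m + 1 = p
        · rw [hlast, ← hc_def, hsigc]
          have h0 : (s + 1) % (m - r + p) = 0 := by
            have hseq : s + 1 = m - r + p := by omega
            simp [hseq]
          rw [h0, if_pos (by omega), hb_def]
          all_goals exact congrArg o (by omega)
        · have hlt : s + 1 < m - r + p := by omega
          rw [hsig_id (r+s-m+1) (by omega) (by omega) (by omega) (by omega) (by omega),
            Nat.mod_eq_of_lt hlt, if_neg (by omega)]
          all_goals exact congrArg o (by omega))
  obtain ⟨horbA30, hcardA30⟩ := hArc3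
  set A3 := (Finset.range (m-r+p)).image
    (fun s => o (if r + s ≤ m then r + s else r + s - m)) with hA3_def
  have h30 : o (if r + 0 ≤ m then r + 0 else r + 0 - m) = o r := by
    show o (if r + 0 ≤ m then r + 0 else r + 0 - m) = o r
    rw [if_pos (by omega)]
    exact congrArg o (by omega)
  rw [h30] at horbA30 hcardA30
  have horbA3 : orbitOf u n (o r) = A3 := horbA30
  have hcardA3 : A3.card = m - r + p := by rw [horbA3] at hcardA30; exact hcardA30
  -- arcs are orbits for all their elements
  have horbA1' : ∀ x ∈ A1, orbitOf u n x = A1 := by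
    intro x hx
    rw [← horbA1]
    exact orbit_eq_of_mem hu_map hu_inj (o p) hpb.1 hpb.2 x (horbA1 ▸ hx)
  have horbA2' : ∀ x ∈ A2, orbitOf u n x = A2 := by
    intro x hx
    rw [← horbA2]
    exact orbit_eq_of_mem hu_map hu_inj (o q) hqb.1 hqb.2 x (horbA2 ▸ hx)
  have horbA3' : ∀ x ∈ A3, orbitOf u n x = A3 := by
    intro x hx
    rw [← horbA3]
    exact orbit_eq_of_mem hu_map hu_inj (o r) hrb.1 hrb.2 x (horbA3 ▸ hx)
  -- union of arcs is the cycle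
  have hunion : A1 ∪ A2 ∪ A3 = OC := by
    ext y
    simp only [hA1_def, hA2_def, hA3_def, hOC_def, Finset.mem_union, Finset.mem_image,
      Finset.mem_range]
    constructor
    · rintro ((⟨s, hs, rfl⟩ | ⟨s, hs, rfl⟩) | ⟨s, hs, rfl⟩)
      · exact ⟨p + s - 1, by omega, by congr 1; omega⟩
      · exact ⟨q + s - 1, by omega, by congr 1; omega⟩
      · by_cases hsm : r + s ≤ m
        · exact ⟨r + s - 1, by omega, by rw [if_pos hsm]; congr 1; omega⟩
        · exact ⟨r + s - m - 1, by omega, by rw [if_neg hsm]; congr 1; omega⟩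
    · rintro ⟨t, ht, rfl⟩
      by_cases h1 : t + 1 < p
      · refine Or.inr ⟨m - r + t + 1, by omega, ?_⟩
        rw [if_neg (by omega)]
        congr 1
        omega
      · by_cases h2 : t + 1 < q
        · exact Or.inl (Or.inl ⟨t + 1 - p, by omega, by congr 1; omega⟩)
        · by_cases h3 : t + 1 < r
          · exact Or.inl (Or.inr ⟨t + 1 - q, by omega, by congr 1; omega⟩)
          · refine Or.inr ⟨t + 1 - r, by omega, ?_⟩
            rw [if_pos (by omega)]
            congr 1
            omega
  -- disjointness of arcs
  have hmemA1 : ∀ y ∈ A1, ∃ s, s < q - p ∧ y = o (p + s) := by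
    intro y hy
    rw [hA1_def] at hy
    obtain ⟨s, hs, rfl⟩ := Finset.mem_image.1 hy
    exact ⟨s, Finset.mem_range.1 hs, rfl⟩
  have hmemA2 : ∀ y ∈ A2, ∃ s, s < r - q ∧ y = o (q + s) := by
    intro y hy
    rw [hA2_def] at hy
    obtain ⟨s, hs, rfl⟩ := Finset.mem_image.1 hy
    exact ⟨s, Finset.mem_range.1 hs, rfl⟩
  have hmemA3 : ∀ y ∈ A3, ∃ t, (r ≤ t ∧ t ≤ m ∨ 1 ≤ t ∧ t < p) ∧ y = o t := by
    intro y hy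
    rw [hA3_def] at hy
    obtain ⟨s, hs, rfl⟩ := Finset.mem_image.1 hy
    rw [Finset.mem_range] at hs
    by_cases hsm : r + s ≤ m
    · exact ⟨r + s, by omega, by rw [if_pos hsm]⟩
    · exact ⟨r + s - m, by omega, by rw [if_neg hsm]⟩
  have hd12 : Disjoint A1 A2 := by
    rw [Finset.disjoint_left]
    intro y hy1 hy2
    obtain ⟨s, hs, rfl⟩ := hmemA1 y hy1
    obtain ⟨t, ht, heq⟩ := hmemA2 _ hy2
    have := hoinj (p+s) (q+t) (by omega) (by omega) (by omega) (by omega) heq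
    omega
  have hd13 : Disjoint A1 A3 := by
    rw [Finset.disjoint_left]
    intro y hy1 hy3
    obtain ⟨s, hs, rfl⟩ := hmemA1 y hy1
    obtain ⟨t, ht, heq⟩ := hmemA3 _ hy3
    have := hoinj (p+s) t (by omega) (by omega) (by omega) (by omega) heq
    omega
  have hd23 : Disjoint A2 A3 := by
    rw [Finset.disjoint_left]
    intro y hy2 hy3
    obtain ⟨s, hs, rfl⟩ := hmemA2 y hy2
    obtain ⟨t, ht, heq⟩ := hmemA3 _ hy3
    have := hoinj (q+s) t (by omega) (by omega) (by omega) (by omega) heq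
    omega
  -- orbits off the cycle are unchanged
  have ha_mem : a ∈ OC := hmemOC q (by omega) (by omega)
  have hb_mem : b ∈ OC := hmemOC r (by omega) (by omega)
  have hc_mem : c ∈ OC := hmemOC p (by omega) (by omega)
  have horb_off : ∀ x, 1 ≤ x → x ≤ n + 1 → x ∉ OC → orbitOf u n x = orbitOf f n x := by
    intro x h1 h2 hx
    have hnotin : ∀ z ∈ orbitOf f n x, z ≠ a ∧ z ≠ b ∧ z ≠ c := by
      intro z hz
      have hgen : ∀ w₀, w₀ ∈ OC → z = w₀ → False := by
        intro w₀ hw₀ hzw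
        subst hzw
        have h3 := orbit_eq_of_mem hf_map hf_inj x h1 h2 _ hz
        have h4 := horbOC z hw₀
        have h5 : x ∈ OC := by
          rw [← h4, h3]
          exact self_mem_orbit x h1 h2
        exact hx h5
      exact ⟨fun h => hgen a ha_mem h, fun h => hgen b hb_mem h, fun h => hgen c hc_mem h⟩
    obtain ⟨d, _, _, _, hself, _, _⟩ := orbit_char hf_map hf_inj x h1 h2
    have hit : ∀ k, u^[k] x = f^[k] x := by
      intro k
      induction k with
      | zero => rfl
      | succ k ih =>
        rw [Function.iterate_succ_apply', Function.iterate_succ_apply', ih]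
        show sigFun a b c (f (f^[k] x)) = f (f^[k] x)
        rw [← Function.iterate_succ_apply' f k x]
        obtain ⟨hna, hnb, hnc⟩ := hnotin _ (hself (k+1))
        exact sig_id _ hna hnb hnc
    unfold orbitOf
    congr 1
    apply Finset.image_congr
    intro k _
    exact hit k
  -- counting
  set Icc := Finset.Icc 1 (n+1) with hIcc_def
  set Pf := fun i => (∀ j ∈ orbitOf f n i, i ≤ j) ∧ (orbitOf f n i).card % 2 = 1 with hPf_def
  set Pu := fun i => (∀ j ∈ orbitOf u n i, i ≤ j) ∧ (orbitOf u n i).card % 2 = 1 with hPu_def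
  have hcodd_f : coddAux f n = (OC.filter Pf).card + ((Icc \ OC).filter Pf).card := by
    unfold coddAux
    exact filter_card_split _ OC _ hOC_sub
  have hcodd_u : coddAux u n = (OC.filter Pu).card + ((Icc \ OC).filter Pu).card := by
    unfold coddAux
    exact filter_card_split _ OC _ hOC_sub
  have hoff_eq : (Icc \ OC).filter Pf = (Icc \ OC).filter Pu := by
    apply Finset.filter_congr
    intro x hx
    rw [Finset.mem_sdiff, hIcc_def, Finset.mem_Icc] at hx
    rw [hPf_def, hPu_def]
    simp only
    rw [horb_off x hx.1.1 hx.1.2 hx.2]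
  have hOC_f : (OC.filter Pf).card = 1 := by
    have := filter_orbit_card (θ := f) (n := n) OC ⟨o 1, horbC ▸ self_mem_orbit (o 1)
      (hbound 1 le_rfl (by omega)).1 (hbound 1 le_rfl (by omega)).2⟩ horbOC
    rw [hOCcard, hOdd] at this
    exact this
  have hOC_u : (OC.filter Pu).card = (q-p) % 2 + (r-q) % 2 + (m-r+p) % 2 := by
    rw [← hunion, Finset.filter_union, Finset.filter_union,
      Finset.card_union_of_disjoint, Finset.card_union_of_disjoint]
    · have e1 := filter_orbit_card (θ := u) (n := n) A1
        ⟨o p, horbA1 ▸ self_mem_orbit (o p) hpb.1 hpb.2⟩ horbA1'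
      have e2 := filter_orbit_card (θ := u) (n := n) A2
        ⟨o q, horbA2 ▸ self_mem_orbit (o q) hqb.1 hqb.2⟩ horbA2'
      have e3 := filter_orbit_card (θ := u) (n := n) A3
        ⟨o r, horbA3 ▸ self_mem_orbit (o r) hrb.1 hrb.2⟩ horbA3'
      rw [hcardA1] at e1
      rw [hcardA2] at e2
      rw [hcardA3] at e3
      rw [e1, e2, e3]
    · exact Finset.disjoint_filter_filter hd12
    · rw [← Finset.filter_union]
      exact Finset.disjoint_filter_filter
        (Finset.disjoint_union_left.2 ⟨hd13, hd23⟩)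
  -- conjugation
  have hconj : codd n (applyTransp π a b c) = coddAux u n := by
    show coddAux (cgNext (applyTransp π a b c)) n = coddAux u n
    apply coddAux_conj u (rotEquiv (a+1) (b+1) (c+1)) hu_map hu_inj
      (rotEquiv_Icc h1a hab hbc hcn)
    intro x
    exact conj_pointwise h1a hab hbc hcn x
  have hcodd_pi : codd n π = coddAux f n := rfl
  rw [hconj, hcodd_pi, hcodd_u, hcodd_f, hOC_u, hOC_f, hoff_eq]
  omega

-- ======================= Part VI : main theorem =======================

lemma build_triple {n : ℕ} {π : Equiv.Perm ℕ} (hπ : IsExtPerm n π)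
    {m : ℕ} {o : ℕ → ℕ} (hC : IsCycleOf n π m o) (hOdd : m % 2 = 1)
    {p q r : ℕ} (h1 : 1 ≤ p) (h2 : p < q) (h3 : q < r) (h4 : r ≤ m)
    (h5 : (q - p) % 2 = 1) (h6 : (r - q) % 2 = 1)
    (h7 : o p > o r) (h8 : o r > o q) :
    ValidOrientedTriple n π (o p) (o q) (o r) := by
  have hsp := splitting hπ hC hOdd h1 h2 h3 h4 h7 h8
  have hbound := hC.2.1
  have hqb := hbound q (by omega) (by omega)
  have hpb := hbound p (by omega) (by omega)
  have hmr : (m - r + p) % 2 = 1 := by omega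
  refine Or.inl ⟨h7, h8, ?_⟩
  refine ⟨hqb.1, h8, h7, hpb.2, ?_⟩
  rw [h5, h6, hmr] at hsp
  omega

/-- If an odd cycle `C = (o_1, …, o_m)` of the cycle graph `G(π)` contains
a valid oriented triple `(o_i, o_j, o_k)`, with positions `i < j < k` and `o_i > o_k > o_j`,
then `C` contains a valid oriented triple `(o_{i'}, o_{j'}, o_{k'})`, with positions
`i' < j' < k'`, such that `i' ∈ {1, 2}` or `k' = j' + 1`. -/
theorem odd_cycle_valid_triple_case_one
    (n : ℕ) (π : Equiv.Perm ℕ) (hπ : IsExtPerm n π)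
    (m : ℕ) (o : ℕ → ℕ) (hC : IsCycleOf n π m o) (hOdd : m % 2 = 1)
    (i j k : ℕ) (hi : 1 ≤ i) (hij : i < j) (hjk : j < k) (hk : k ≤ m)
    (hpat : o i > o k ∧ o k > o j)
    (hvalid : ValidOrientedTriple n π (o i) (o j) (o k)) :
    ∃ i' j' k' : ℕ, 1 ≤ i' ∧ i' < j' ∧ j' < k' ∧ k' ≤ m ∧
      (i' = 1 ∨ i' = 2 ∨ k' = j' + 1) ∧
      ValidOrientedTriple n π (o i') (o j') (o k') := by
  obtain ⟨hpat1, hpat2⟩ := hpat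
  have hbound := hC.2.1
  have hoinj := hC.2.2.1
  have hmax := hC.2.2.2.2
  by_cases hi2 : i ≤ 2
  · exact ⟨i, j, k, hi, hij, hjk, hk, by omega, hvalid⟩
  by_cases hkj : k = j + 1
  · exact ⟨i, j, k, hi, hij, hjk, hk, by omega, hvalid⟩
  -- extract the 2-transposition from hvalid
  have h2t : IsTwoTransposition n π (o j) (o k) (o i) := by
    rcases hvalid with ⟨_, _, h⟩ | ⟨h1, _, _⟩ | ⟨_, h2, _⟩
    · exact h
    · omega
    · omega
  -- parities of the gaps
  have hsp := splitting hπ hC hOdd hi hij hjk hk hpat1 hpat2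
  have hcodd2 := h2t.2.2.2.2
  have hpar1 : (j - i) % 2 = 1 := by omega
  have hpar2 : (k - j) % 2 = 1 := by omega
  by_cases hio : i % 2 = 1
  · -- i odd (and ≥ 3) : take (1, j, k)
    refine ⟨1, j, k, le_rfl, by omega, hjk, hk, Or.inl rfl, ?_⟩
    exact build_triple hπ hC hOdd le_rfl (by omega) hjk hk (by omega) hpar2
      (hmax k (by omega) hk) hpat2
  · -- i even (≥ 4), j odd, k even
    have hne2k : o 2 ≠ o k := by
      intro h
      have := hoinj 2 k (by omega) (by omega) (by omega) hk h
      omega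
    rcases lt_or_gt_of_ne hne2k with h2k | h2k
    · -- o 2 < o k
      have hnek : o (k-1) ≠ o k := by
        intro h
        have := hoinj (k-1) k (by omega) (by omega) (by omega) hk h
        omega
      rcases lt_or_gt_of_ne hnek with hck | hck
      · -- o (k-1) < o k : take (i, k-1, k)
        refine ⟨i, k-1, k, hi, by omega, by omega, hk, by omega, ?_⟩
        exact build_triple hπ hC hOdd hi (by omega) (by omega) hk (by omega) (by omega)
          hpat1 hck
      · -- o (k-1) > o k : take (1, 2, k-1)
        refine ⟨1, 2, k-1, le_rfl, by omega, by omega, by omega, Or.inl rfl, ?_⟩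
        exact build_triple hπ hC hOdd le_rfl (by omega) (by omega) (by omega)
          (by omega) (by omega) (hmax (k-1) (by omega) (by omega)) (by omega)
    · -- o 2 > o k : take (2, j, k)
      refine ⟨2, j, k, by omega, by omega, hjk, hk, by omega, ?_⟩
      exact build_triple hπ hC hOdd (by omega) (by omega) hjk hk (by omega) hpar2
        h2k hpat2
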